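/- There exists a stochastic language p over the one-letter alphabet Σ = {a} such that p is computed by some multiplicity automaton with real weights, but p is not computed by any probabilistic automaton. -/

import Mathlib

open scoped BigOperators Matrix

/-- A stochastic language over the alphabet `A`: a nonnegative real-valued function on
words whose values are summable with sum `1`. -/
def IsStochastic {A : Type*} (p : List A → ℝ) : Prop :=
  (∀ w, 0 ≤ p w) ∧ HasSum p 1

/-- The matrix associated to a word: the product of the letter matrices. -/
def wordMat {A Q : Type*} [Fintype Q] [DecidableEq Q] (T : A → Matrix Q Q ℝ)
    (w : List A) : Matrix Q Q ℝ :=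
  (w.map T).prod

/-- The series computed by the multiplicity automaton `(ι, T, τ)`. -/
def maSeries {A Q : Type*} [Fintype Q] [DecidableEq Q] (ι τ : Q → ℝ)
    (T : A → Matrix Q Q ℝ) (w : List A) : ℝ :=
  ι ⬝ᵥ (wordMat T w).mulVec τ

/-- The series of state `q` of the multiplicity automaton. -/
def stateSeries {A Q : Type*} [Fintype Q] [DecidableEq Q] (τ : Q → ℝ)
    (T : A → Matrix Q Q ℝ) (q : Q) (w : List A) : ℝ :=
  (wordMat T w).mulVec τ q

/-- `(ι, T, τ)` is a reduced representation of the stochastic language `P`. -/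
def IsReducedRep {A Q : Type*} [Fintype Q] [DecidableEq Q] (ι τ : Q → ℝ)
    (T : A → Matrix Q Q ℝ) (P : List A → ℝ) : Prop :=
  maSeries ι τ T = P ∧ (∀ q, IsStochastic (stateSeries τ T q)) ∧
    LinearIndependent ℝ (stateSeries τ T)

/-- `(ι, T, τ)` is a probabilistic automaton: all weights are nonnegative, the initial
weights sum to `1`, and at every state the terminal weight plus all outgoing transition
weights sum to `1`. -/
def IsPA {A Q : Type*} [Fintype A] [Fintype Q] [DecidableEq Q] (ι τ : Q → ℝ)
    (T : A → Matrix Q Q ℝ) : Prop :=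
  (∀ q, 0 ≤ ι q) ∧ (∀ q, 0 ≤ τ q) ∧ (∀ x q q', 0 ≤ T x q q') ∧
    (∑ q : Q, ι q = 1) ∧ ∀ q, τ q + ∑ x : A, ∑ q' : Q, T x q q' = 1


open Real

lemma exists_small_step {ε : ℝ} (hε : 0 < ε) :
    ∃ (d : ℕ) (j : ℤ), 0 < d ∧ (d : ℝ) - 2 * π * j ≠ 0 ∧ |(d : ℝ) - 2 * π * j| < ε := by
  obtain ⟨N, hN⟩ := exists_nat_gt (2 * π / ε) 
  have hNpos : 0 < N := by
    have h0 : (0:ℝ) < 2 * π / ε := by positivity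
    exact_mod_cast Nat.pos_of_ne_zero (by rintro rfl; push_cast at hN; linarith)
  obtain ⟨j, k, hk0, hkN, hjk⟩ := Real.exists_int_int_abs_mul_sub_le (1 / (2 * π)) hNpos
  set d : ℕ := k.toNat with hd
  have hdk : (d : ℤ) = k := Int.toNat_of_nonneg hk0.le
  have hdR : (d : ℝ) = (k : ℝ) := by exact_mod_cast congrArg (Int.cast : ℤ → ℝ) hdk
  have hπ : (0:ℝ) < π := Real.pi_pos
  have habs : |(d : ℝ) - 2 * π * j| < ε := by
    have h2 : |(k : ℝ) * (1 / (2 * π)) - j| ≤ 1 / (N + 1) := hjk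
    have h3 : |(k : ℝ) - 2 * π * j| = (2 * π) * |(k : ℝ) * (1 / (2 * π)) - j| := by
      rw [← abs_of_pos (show (0:ℝ) < 2 * π by positivity), ← abs_mul]
      rw [mul_sub, abs_of_pos (show (0:ℝ) < 2*π by positivity)]
      have hne : (2*π) ≠ 0 := by positivity
      congr 1
      field_simp
    have h4 : (2 * π) * (1 / ((N:ℝ) + 1)) < ε := by
      rw [div_lt_iff₀ hε] at hN
      have : (2 * π) < ε * N := by linarith
      have hN1 : (0:ℝ) < (N:ℝ) + 1 := by positivity
      rw [mul_one_div, div_lt_iff₀ hN1]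
      nlinarith
    calc |(d : ℝ) - 2 * π * j| = (2 * π) * |(k : ℝ) * (1 / (2 * π)) - j| := by rw [hdR, h3]
    _ ≤ (2 * π) * (1 / (N + 1)) := by
        apply mul_le_mul_of_nonneg_left h2 (by positivity)
    _ < ε := h4
  have hdpos : 0 < d := by omega
  refine ⟨d, j, hdpos, ?_, habs⟩
  intro h0
  have hkr : (k : ℝ) = 2 * π * j := by rw [← hdR]; linarith [sub_eq_zero.mp h0]
  have hj0 : j ≠ 0 := by
    rintro rfl
    push_cast at hkr
    have : (k:ℝ) = 0 := by linarith
    exact hk0.ne' (by exact_mod_cast this)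
  have hpi : π = (k : ℝ) / (2 * j) := by
    have hj : (j:ℝ) ≠ 0 := Int.cast_ne_zero.mpr hj0
    field_simp
    linarith
  have : ((((k : ℚ) / (2 * j)) : ℚ) : ℝ) = π := by push_cast [hpi]; norm_num
  exact irrational_pi.ne_rat _ this.symm

/-- Naturals are dense modulo `2π`. -/
lemma nat_dense_mod (θ : ℝ) {ε : ℝ} (hε : 0 < ε) :
    ∃ (m : ℕ) (k : ℤ), |(m : ℝ) - 2 * π * k - θ| < ε := by
  obtain ⟨d, j, hd, hγ0, hγε⟩ := exists_small_step hε
  set γ : ℝ := (d : ℝ) - 2 * π * j with hγ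
  have hπ : (0:ℝ) < π := Real.pi_pos
  -- c ≡ θ (mod 2π), c ∈ [0, 2π)
  set c : ℝ := θ - 2 * π * ⌊θ / (2 * π)⌋ with hc
  have hc0 : 0 ≤ c := by
    have := Int.floor_le (θ / (2 * π))
    have h2 : (2*π) * ⌊θ / (2 * π)⌋ ≤ (2*π) * (θ / (2*π)) :=
      mul_le_mul_of_nonneg_left this (by positivity)
    rw [mul_div_cancel₀] at h2 <;> [skip; positivity]
    simp only [hc]; linarith
  have hc2 : c < 2 * π := by
    have := Int.lt_floor_add_one (θ / (2 * π))
    have h2 : (2*π) * (θ / (2*π)) < (2*π) * (⌊θ / (2 * π)⌋ + 1) :=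
      mul_lt_mul_of_pos_left this (by positivity)
    rw [mul_div_cancel₀] at h2 <;> [skip; positivity]
    simp only [hc]; nlinarith
  rcases lt_or_gt_of_ne hγ0 with hneg | hpos
  · -- γ < 0 : use c' = c - 2π ∈ [-2π, 0)
    set c' : ℝ := c - 2 * π with hc'
    have hrat : 0 ≤ c' / γ := by rw [div_nonneg_iff]; right; constructor <;> [linarith; exact hneg.le]
    set t : ℕ := (⌊c' / γ⌋).toNat with ht
    have htR : (t : ℝ) = (⌊c' / γ⌋ : ℝ) := by
      exact_mod_cast congrArg (Int.cast : ℤ → ℝ) (Int.toNat_of_nonneg (Int.floor_nonneg.mpr hrat))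
    have h1 : (⌊c' / γ⌋ : ℝ) ≤ c' / γ := Int.floor_le _
    have h2 : c' / γ < (⌊c' / γ⌋ : ℝ) + 1 := Int.lt_floor_add_one _
    -- multiply by γ < 0 flips
    have h3 : (t:ℝ) * γ ≥ c' := by
      rw [htR]
      calc c' = (c' / γ) * γ := by field_simp
      _ ≤ (⌊c' / γ⌋ : ℝ) * γ := by nlinarith
    have h4 : (t:ℝ) * γ + γ < c' := by
      rw [htR]
      calc ((⌊c' / γ⌋:ℝ)) * γ + γ = ((⌊c' / γ⌋ : ℝ) + 1) * γ := by ring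
      _ < (c' / γ) * γ := by nlinarith
      _ = c' := by field_simp
    refine ⟨t * d, (t : ℤ) * j - ⌊θ / (2 * π)⌋ - 1, ?_⟩
    have key : ((t * d : ℕ) : ℝ) - 2 * π * (((t : ℤ) * j - ⌊θ / (2 * π)⌋ - 1 : ℤ) : ℝ) - θ
        = (t:ℝ) * γ - c' := by
      simp only [hγ, hc', hc]; push_cast; ring
    rw [key, abs_lt]
    obtain ⟨hγl, hγr⟩ := abs_lt.mp hγε
    constructor <;> linarith
  · -- γ > 0
    have hrat : 0 ≤ c / γ := div_nonneg hc0 hpos.le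
    set t : ℕ := (⌊c / γ⌋).toNat with ht
    have htR : (t : ℝ) = (⌊c / γ⌋ : ℝ) := by
      exact_mod_cast congrArg (Int.cast : ℤ → ℝ) (Int.toNat_of_nonneg (Int.floor_nonneg.mpr hrat))
    have h1 : (⌊c / γ⌋ : ℝ) ≤ c / γ := Int.floor_le _
    have h2 : c / γ < (⌊c / γ⌋ : ℝ) + 1 := Int.lt_floor_add_one _
    have h3 : (t:ℝ) * γ ≤ c := by
      rw [htR]
      calc (⌊c / γ⌋ : ℝ) * γ ≤ (c / γ) * γ := by nlinarith
      _ = c := by field_simp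
    have h4 : c < (t:ℝ) * γ + γ := by
      rw [htR]
      calc c = (c / γ) * γ := by field_simp
      _ < ((⌊c / γ⌋ : ℝ) + 1) * γ := by nlinarith
      _ = (⌊c / γ⌋:ℝ) * γ + γ := by ring
    refine ⟨t * d, (t : ℤ) * j - ⌊θ / (2 * π)⌋, ?_⟩
    have key : ((t * d : ℕ) : ℝ) - 2 * π * (((t : ℤ) * j - ⌊θ / (2 * π)⌋ : ℤ) : ℝ) - θ
        = (t:ℝ) * γ - c := by
      simp only [hγ, hc]; push_cast; ring
    rw [key, abs_lt]
    obtain ⟨hγl, hγr⟩ := abs_lt.mp hγε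
    constructor <;> linarith

noncomputable section


def gseq (m : ℕ) : ℝ := (2⁻¹)^m * (1 + Real.cos m)

lemma gseq_nonneg (m : ℕ) : 0 ≤ gseq m := by
  have h := Real.neg_one_le_cos (m : ℝ)
  have h2 : (0:ℝ) ≤ (2⁻¹:ℝ)^m := by positivity
  unfold gseq; nlinarith

lemma gseq_le (m : ℕ) : gseq m ≤ 2 * (2⁻¹)^m := by
  have h1 : Real.cos (m:ℝ) ≤ 1 := Real.cos_le_one _
  have h2 : (0:ℝ) ≤ (2⁻¹:ℝ)^m := by positivity
  unfold gseq; nlinarith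

lemma gseq_summable : Summable gseq :=
  Summable.of_nonneg_of_le gseq_nonneg gseq_le
    ((summable_geometric_of_lt_one (by norm_num) (by norm_num)).mul_left 2)

def Ssum : ℝ := ∑' m, gseq m

lemma Ssum_pos : 0 < Ssum := by
  have h0 : gseq 0 ≤ Ssum := Summable.le_tsum gseq_summable 0 (fun i _ => gseq_nonneg i)
  have : gseq 0 = 2 := by norm_num [gseq]
  unfold Ssum at *; linarith

def KK : ℝ := Ssum⁻¹

lemma KK_pos : 0 < KK := inv_pos.mpr Ssum_pos

/-- the witness language -/
def pLang (w : List Unit) : ℝ := KK * gseq w.length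

lemma pLang_hasSum : HasSum pLang 1 := by
  have h1 : HasSum (fun m => KK * gseq m) (KK * Ssum) := gseq_summable.hasSum.mul_left KK
  have h2 : KK * Ssum = 1 := inv_mul_cancel₀ Ssum_pos.ne'
  rw [h2] at h1
  have := ((⟨List.length, fun m => List.replicate m (), fun w => (List.eq_replicate_iff.mpr ⟨rfl, fun _ _ => rfl⟩).symm, fun m => List.length_replicate⟩ : List Unit ≃ ℕ).hasSum_iff (f := fun m => KK * gseq m) (a := 1)).mpr h1
  exact this

-- MA construction
def Amat : Matrix (Fin 3) (Fin 3) ℝ :=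
  !![2⁻¹, 0, 0; 0, 2⁻¹ * Real.cos 1, -(2⁻¹ * Real.sin 1); 0, 2⁻¹ * Real.sin 1, 2⁻¹ * Real.cos 1]

def vvec (m : ℕ) : Fin 3 → ℝ :=
  ![(2⁻¹:ℝ)^m, (2⁻¹)^m * Real.cos m, (2⁻¹)^m * Real.sin m]

lemma Amat_step (m : ℕ) : Amat.mulVec (vvec m) = vvec (m+1) := by
  funext i
  have hcos : Real.cos ((m:ℝ) + 1) = Real.cos m * Real.cos 1 - Real.sin m * Real.sin 1 :=
    Real.cos_add m 1
  have hsin : Real.sin ((m:ℝ) + 1) = Real.sin m * Real.cos 1 + Real.cos m * Real.sin 1 :=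
    Real.sin_add m 1
  fin_cases i <;>
    simp [Amat, vvec, Matrix.mulVec, dotProduct, Fin.sum_univ_three, pow_succ,
      Real.cos_add, Real.sin_add] <;>
    push_cast [Real.cos_add, Real.sin_add] <;> ring

lemma vvec_zero : vvec 0 = ![1, 1, 0] := by
  funext i; fin_cases i <;> simp [vvec]

lemma wordMat_mulVec (w : List Unit) :
    (wordMat (fun _ => Amat) w).mulVec ![1, 1, 0] = vvec w.length := by
  induction w with
  | nil => simpa [wordMat] using vvec_zero.symm
  | cons a w ih =>
      have : wordMat (fun _ => Amat) (a :: w) = Amat * wordMat (fun _ => Amat) w := by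
        simp [wordMat]
      rw [this, ← Matrix.mulVec_mulVec, ih, Amat_step]
      simp

lemma maSeries_eq : maSeries ![KK, KK, 0] ![1, 1, 0] (fun _ => Amat) = pLang := by
  funext w
  unfold maSeries
  rw [wordMat_mulVec]
  simp [dotProduct, Fin.sum_univ_three, vvec, pLang, gseq]
  ring

/-- Helper: convergence of cosines along a subsequence approximating angle `α` mod 2π. -/
lemma cos_tendsto {r : ℕ → ℕ} {z : ℕ → ℤ} {α : ℝ}
    (hrz : ∀ t, |(r t : ℝ) - 2 * π * z t - α| < 1 / (t + 1))
    {φ : ℕ → ℕ} (hφ : StrictMono φ) (x : ℝ) :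
    Filter.Tendsto (fun t => Real.cos (x + (r (φ t) : ℝ)))
      Filter.atTop (nhds (Real.cos (x + α))) := by
  set e : ℕ → ℝ := fun t => (r t : ℝ) - 2 * π * z t - α with he
  have hre : ∀ t, Real.cos (x + (r t : ℝ)) = Real.cos ((x + α + e t) + z t * (2 * π)) := by
    intro t
    congr 1
    simp only [he]; ring
  have he0 : Filter.Tendsto (fun t => e (φ t)) Filter.atTop (nhds 0) := by
    apply squeeze_zero_norm (fun t => ?_) tendsto_one_div_add_atTop_nhds_zero_nat
    have h1 : |e (φ t)| < 1 / (φ t + 1) := hrz (φ t)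
    have h2 : (1:ℝ) / (φ t + 1) ≤ 1 / (t + 1) := by
      apply div_le_div_of_nonneg_left (by norm_num) (by positivity)
      have h3 : (t:ℝ) ≤ (φ t : ℝ) := by exact_mod_cast hφ.le_apply
      linarith
    exact le_of_lt (lt_of_lt_of_le h1 h2)
  have hlim : Filter.Tendsto (fun t => x + α + e (φ t)) Filter.atTop (nhds (x + α)) := by
    have := he0.const_add (x + α)
    simpa using this
  have : Filter.Tendsto (fun t => Real.cos (x + α + e (φ t))) Filter.atTop
      (nhds (Real.cos (x + α))) := (Real.continuous_cos.tendsto _).comp hlim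
  refine this.congr fun t => ?_
  rw [hre (φ t), Real.cos_add_int_mul_two_pi]

theorem no_nonneg_rep {K : ℝ} (hK : 0 < K) (n : ℕ) (ι τ : Fin n → ℝ)
    (M : Matrix (Fin n) (Fin n) ℝ)
    (hι : ∀ q, 0 ≤ ι q) (hτ : ∀ q, 0 ≤ τ q) (hM : ∀ q q', 0 ≤ M q q')
    (hval : ∀ m : ℕ, ι ⬝ᵥ (M ^ m).mulVec τ = K * ((2⁻¹ : ℝ) ^ m * (1 + Real.cos m))) :
    False := by
  classical
  -- nonnegativity of powers
  have hMpow : ∀ m q q', 0 ≤ (M ^ m) q q' := by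
    intro m
    induction m with
    | zero => intro q q'; by_cases h : q = q' <;> simp [Matrix.one_apply, h]
    | succ m ih =>
        intro q q'
        rw [pow_succ, Matrix.mul_apply]
        exact Finset.sum_nonneg fun p _ => mul_nonneg (ih q p) (hM p q')
  set u : ℕ → Fin n → ℝ := fun r q => 2 ^ r * Matrix.vecMul ι (M ^ r) q with hu
  set y : ℕ → Fin n → ℝ := fun s q => 2 ^ s * (M ^ s).mulVec τ q with hy
  have hu0 : ∀ r q, 0 ≤ u r q := by
    intro r q
    apply mul_nonneg (by positivity)
    simp only [Matrix.vecMul, dotProduct]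
    exact Finset.sum_nonneg fun p _ => mul_nonneg (hι p) (hMpow r p q)
  have hy0 : ∀ s q, 0 ≤ y s q := by
    intro s q
    apply mul_nonneg (by positivity)
    simp only [Matrix.mulVec, dotProduct]
    exact Finset.sum_nonneg fun p _ => mul_nonneg (hMpow s q p) (hτ p)
  have key : ∀ r s : ℕ, u r ⬝ᵥ y s = K * (1 + Real.cos ((r : ℝ) + (s : ℝ))) := by
    intro r s
    have h1 : u r ⬝ᵥ y s
        = (2:ℝ) ^ (r + s) * (Matrix.vecMul ι (M ^ r) ⬝ᵥ (M ^ s).mulVec τ) := by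
      unfold dotProduct
      rw [Finset.mul_sum]
      exact Finset.sum_congr rfl fun q _ => by rw [pow_add]; ring
    have h2 : Matrix.vecMul ι (M ^ r) ⬝ᵥ (M ^ s).mulVec τ = ι ⬝ᵥ (M ^ (r + s)).mulVec τ := by
      rw [Matrix.dotProduct_mulVec, Matrix.vecMul_vecMul, ← pow_add, ← Matrix.dotProduct_mulVec]
    have h3 : (2:ℝ) ^ (r + s) * ((2⁻¹ : ℝ) ^ (r + s)) = 1 := by
      rw [← mul_pow]; norm_num
    rw [h1, h2, hval (r + s)]
    push_cast
    linear_combination h3 * (K * (1 + Real.cos ((r:ℝ)+(s:ℝ))))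
  -- useful coordinates
  set Good : Fin n → Prop := fun q => (∃ a, 0 < u a q) ∧ (∃ b, 0 < y b q) with hGood
  set ut : ℕ → Fin n → ℝ := fun r q => if Good q then u r q else 0 with hut
  set yt : ℕ → Fin n → ℝ := fun s q => if Good q then y s q else 0 with hyt
  have hut0 : ∀ r q, 0 ≤ ut r q := by
    intro r q; simp only [hut]; split; exacts [hu0 r q, le_refl 0]
  have hyt0 : ∀ s q, 0 ≤ yt s q := by
    intro s q; simp only [hyt]; split; exacts [hy0 s q, le_refl 0]
  have keyt : ∀ r s : ℕ, ut r ⬝ᵥ yt s = K * (1 + Real.cos ((r : ℝ) + (s : ℝ))) := by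
    intro r s
    rw [← key r s]
    unfold dotProduct
    apply Finset.sum_congr rfl
    intro q _
    by_cases h : Good q
    · simp only [hut, hyt, if_pos h]
    · simp only [hut, hyt, if_neg h]
      rw [hGood] at h
      rcases (not_and_or.mp h) with h' | h'
      · push_neg at h'
        have : u r q = 0 := le_antisymm (h' r) (hu0 r q)
        rw [this]; ring
      · push_neg at h'
        have : y s q = 0 := le_antisymm (h' s) (hy0 s q)
        rw [this]; ring
  -- uniform bounds on useful coordinates
  have hBu : ∃ Bu : Fin n → ℝ, ∀ r q, ut r q ≤ Bu q := by
    refine ⟨fun q => if h : Good q then 2 * K / (y h.2.choose q) else 0, fun r q => ?_⟩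
    by_cases h : Good q
    · simp only [hut, if_pos h, dif_pos h]
      have hb : 0 < y h.2.choose q := h.2.choose_spec
      rw [le_div_iff₀ hb]
      calc u r q * y h.2.choose q
          ≤ u r ⬝ᵥ y h.2.choose := by
            unfold dotProduct
            exact Finset.single_le_sum
              (f := fun p => u r p * y h.2.choose p)
              (fun p _ => mul_nonneg (hu0 r p) (hy0 _ p)) (Finset.mem_univ q)
      _ = K * (1 + Real.cos ((r : ℝ) + (h.2.choose : ℝ))) := key r _
      _ ≤ 2 * K := by nlinarith [Real.cos_le_one ((r:ℝ) + (h.2.choose : ℝ))]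
    · simp [hut, if_neg h, dif_neg h]
  have hBy : ∃ By : Fin n → ℝ, ∀ s q, yt s q ≤ By q := by
    refine ⟨fun q => if h : Good q then 2 * K / (u h.1.choose q) else 0, fun s q => ?_⟩
    by_cases h : Good q
    · simp only [hyt, if_pos h, dif_pos h]
      have hb : 0 < u h.1.choose q := h.1.choose_spec
      rw [le_div_iff₀ hb]
      calc y s q * u h.1.choose q
          = u h.1.choose q * y s q := by ring
      _ ≤ u h.1.choose ⬝ᵥ y s := by
            unfold dotProduct
            exact Finset.single_le_sum
              (f := fun p => u h.1.choose p * y s p)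
              (fun p _ => mul_nonneg (hu0 _ p) (hy0 s p)) (Finset.mem_univ q)
      _ = K * (1 + Real.cos ((h.1.choose : ℝ) + (s : ℝ))) := key _ s
      _ ≤ 2 * K := by nlinarith [Real.cos_le_one ((h.1.choose : ℝ) + (s:ℝ))]
    · simp [hyt, if_neg h, dif_neg h]
  obtain ⟨Bu, hBu⟩ := hBu
  obtain ⟨By, hBy⟩ := hBy
  -- angle sequences
  have hseq : ∀ α : ℝ, ∃ (r : ℕ → ℕ) (z : ℕ → ℤ),
      ∀ t, |(r t : ℝ) - 2 * π * z t - α| < 1 / (t + 1) := by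
    intro α
    have h : ∀ t : ℕ, ∃ (m : ℕ) (k : ℤ), |(m : ℝ) - 2 * π * k - α| < 1 / (t + 1) :=
      fun t => nat_dense_mod α (by positivity)
    choose r z h using h
    exact ⟨r, z, h⟩
  -- compactness
  have hCu : IsCompact (Set.univ.pi fun q => Set.Icc (0:ℝ) (Bu q)) :=
    isCompact_univ_pi fun q => isCompact_Icc
  have hCy : IsCompact (Set.univ.pi fun q => Set.Icc (0:ℝ) (By q)) :=
    isCompact_univ_pi fun q => isCompact_Icc
  have hmemu : ∀ r, ut r ∈ Set.univ.pi fun q => Set.Icc (0:ℝ) (Bu q) := by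
    intro r
    rw [Set.mem_univ_pi]
    exact fun q => ⟨hut0 r q, hBu r q⟩
  have hmemy : ∀ s, yt s ∈ Set.univ.pi fun q => Set.Icc (0:ℝ) (By q) := by
    intro s
    rw [Set.mem_univ_pi]
    exact fun q => ⟨hyt0 s q, hBy s q⟩
  set D := 2 ^ n + 1 with hD
  set θf : Fin D → ℝ := fun i => (i : ℕ) * (π / D) with hθf
  -- stage 1 : limits of u-vectors along angles θf i
  have limU : ∀ i : Fin D, ∃ U : Fin n → ℝ, (∀ q, 0 ≤ U q) ∧
      ∀ s : ℕ, U ⬝ᵥ yt s = K * (1 + Real.cos ((s : ℝ) + θf i)) := by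
    intro i
    obtain ⟨r, z, hrz⟩ := hseq (θf i)
    obtain ⟨U, hUC, φ, hφ, hconv⟩ := hCu.tendsto_subseq (fun t => hmemu (r t))
    refine ⟨U, fun q => (Set.mem_univ_pi.mp hUC q).1, fun s => ?_⟩
    have cont : Continuous fun v : Fin n → ℝ => v ⬝ᵥ yt s := by
      unfold dotProduct
      exact continuous_finset_sum _ fun q _ => (continuous_apply q).mul continuous_const
    have h1 : Filter.Tendsto (fun t => ut (r (φ t)) ⬝ᵥ yt s) Filter.atTop
        (nhds (U ⬝ᵥ yt s)) := (cont.tendsto U).comp hconv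
    have h3 : Filter.Tendsto (fun t => K * (1 + Real.cos ((s:ℝ) + (r (φ t) : ℝ))))
        Filter.atTop (nhds (K * (1 + Real.cos ((s:ℝ) + θf i)))) :=
      (((cos_tendsto hrz hφ ((s:ℝ))).const_add 1).const_mul K)
    have h2 : (fun t => ut (r (φ t)) ⬝ᵥ yt s)
        = fun t => K * (1 + Real.cos ((s:ℝ) + (r (φ t) : ℝ))) := by
      funext t
      rw [keyt, add_comm ((r (φ t) : ℝ))]
    rw [h2] at h1
    exact tendsto_nhds_unique h1 h3
  choose U hU0 hU using limU
  -- stage 2 : limits of y-vectors along angles π - θf j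
  have limY : ∀ j : Fin D, ∃ Y : Fin n → ℝ, (∀ q, 0 ≤ Y q) ∧
      ∀ i : Fin D, U i ⬝ᵥ Y = K * (1 + Real.cos (θf i + (π - θf j))) := by
    intro j
    obtain ⟨sq, z, hsz⟩ := hseq (π - θf j)
    obtain ⟨Y, hYC, ψ, hψ, hconv⟩ := hCy.tendsto_subseq (fun t => hmemy (sq t))
    refine ⟨Y, fun q => (Set.mem_univ_pi.mp hYC q).1, fun i => ?_⟩
    have cont : Continuous fun v : Fin n → ℝ => U i ⬝ᵥ v := by
      unfold dotProduct
      exact continuous_finset_sum _ fun q _ => continuous_const.mul (continuous_apply q)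
    have h1 : Filter.Tendsto (fun t => U i ⬝ᵥ yt (sq (ψ t))) Filter.atTop
        (nhds (U i ⬝ᵥ Y)) := (cont.tendsto Y).comp hconv
    have h3 : Filter.Tendsto (fun t => K * (1 + Real.cos (θf i + (sq (ψ t) : ℝ))))
        Filter.atTop (nhds (K * (1 + Real.cos (θf i + (π - θf j))))) :=
      (((cos_tendsto hsz hψ (θf i)).const_add 1).const_mul K)
    have h2 : (fun t => U i ⬝ᵥ yt (sq (ψ t)))
        = fun t => K * (1 + Real.cos (θf i + (sq (ψ t) : ℝ))) := by
      funext t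
      rw [hU i, add_comm ((sq (ψ t) : ℝ))]
    rw [h2] at h1
    exact tendsto_nhds_unique h1 h3
  choose Y hY0 hY using limY
  -- the diagonal products vanish
  have hzero : ∀ j : Fin D, U j ⬝ᵥ Y j = 0 := by
    intro j
    rw [hY j j, show θf j + (π - θf j) = π by ring, Real.cos_pi]
    ring
  -- the off-diagonal products are positive
  have hDpos : (0:ℝ) < D := by positivity
  have hpos : ∀ i j : Fin D, i ≠ j → 0 < U i ⬝ᵥ Y j := by
    intro i j hij
    rw [hY j i, show θf i + (π - θf j) = π - (θf j - θf i) by ring, Real.cos_pi_sub]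
    have hx : Real.cos (θf j - θf i) < 1 := by
      have hne : θf j - θf i ≠ 0 := by
        have hπD : (0:ℝ) < π / D := by positivity
        have hji : ((j:ℕ):ℝ) ≠ ((i:ℕ):ℝ) := by
          intro h
          have : j = i := Fin.ext (by exact_mod_cast h)
          exact hij this.symm
        simp only [hθf]
        intro h
        exact hji (mul_right_cancel₀ (ne_of_gt hπD) (sub_eq_zero.mp h))
      have habs : |θf j - θf i| < π := by
        simp only [hθf]
        rw [show ((j:ℕ):ℝ) * (π / D) - ((i:ℕ):ℝ) * (π / D) = (((j:ℕ):ℝ) - ((i:ℕ):ℝ)) * (π / D) by ring,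
          abs_mul, abs_of_pos (show (0:ℝ) < π / D by positivity)]
        have hj : ((j:ℕ):ℝ) < D := by exact_mod_cast j.is_lt
        have hi : ((i:ℕ):ℝ) < D := by exact_mod_cast i.is_lt
        have hj0 : (0:ℝ) ≤ ((j:ℕ):ℝ) := by positivity
        have hi0 : (0:ℝ) ≤ ((i:ℕ):ℝ) := by positivity
        have h2 : |((j:ℕ):ℝ) - ((i:ℕ):ℝ)| < (D:ℝ) := by
          rw [abs_lt]; constructor <;> linarith
        calc |((j:ℕ):ℝ) - ((i:ℕ):ℝ)| * (π / D) < (D:ℝ) * (π / D) := by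
              apply mul_lt_mul_of_pos_right h2 (by positivity)
        _ = π := by field_simp
      rcases lt_or_eq_of_le (Real.cos_le_one (θf j - θf i)) with h | h
      · exact h
      · exfalso
        obtain ⟨k, hk⟩ := (Real.cos_eq_one_iff _).mp h
        have hπ : (0:ℝ) < π := Real.pi_pos
        rcases lt_trichotomy k 0 with hk0 | hk0 | hk0
        · have hle : (k:ℝ) ≤ -1 := by
            have : k ≤ -1 := by omega
            exact_mod_cast this
          rw [← hk] at habs
          rw [abs_mul, abs_of_pos (by positivity : (0:ℝ) < 2 * π)] at habs
          have h1 : (1:ℝ) ≤ |(k:ℝ)| := by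
            rw [abs_of_nonpos (by linarith)]; linarith
          nlinarith
        · subst hk0
          simp only [Int.cast_zero, zero_mul] at hk
          exact hne hk.symm
        · have hge : (1:ℝ) ≤ (k:ℝ) := by
            have : 1 ≤ k := by omega
            exact_mod_cast this
          rw [← hk] at habs
          rw [abs_mul, abs_of_pos (by positivity : (0:ℝ) < 2 * π)] at habs
          have h1 : (1:ℝ) ≤ |(k:ℝ)| := by
            rw [abs_of_pos (by linarith)]; linarith
          nlinarith
    nlinarith
  -- supports give an injection into subsets, contradiction by counting
  set supp : Fin D → Finset (Fin n) := fun i => Finset.univ.filter (fun q => 0 < U i q)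
    with hsuppdef
  have hinj : ∀ i j : Fin D, i ≠ j → supp i ≠ supp j := by
    intro i j hij heq
    have h1 : 0 < U i ⬝ᵥ Y j := hpos i j hij
    have h2 : ∃ q, 0 < U i q * Y j q := by
      by_contra h
      push_neg at h
      have : U i ⬝ᵥ Y j ≤ 0 := Finset.sum_nonpos fun q _ => h q
      linarith
    obtain ⟨q, hq⟩ := h2
    have hUiq : 0 < U i q := by
      rcases mul_pos_iff.mp hq with ⟨h', _⟩ | ⟨h', _⟩
      · exact h'
      · linarith [hU0 i q]
    have hYjq : 0 < Y j q := by
      rcases mul_pos_iff.mp hq with ⟨_, h'⟩ | ⟨_, h'⟩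
      · exact h'
      · linarith [hU0 i q]
    have hqmem : q ∈ supp i := by
      simp only [hsuppdef, Finset.mem_filter, Finset.mem_univ, true_and]
      exact hUiq
    rw [heq] at hqmem
    have hUjq : 0 < U j q := by
      simpa only [hsuppdef, Finset.mem_filter, Finset.mem_univ, true_and] using hqmem
    -- but the diagonal product for j vanishes
    have hz := hzero j
    have hterm : U j q * Y j q = 0 := by
      have := (Finset.sum_eq_zero_iff_of_nonneg
        (fun p _ => mul_nonneg (hU0 j p) (hY0 j p))).mp hz q (Finset.mem_univ q)
      exact this
    nlinarith
  have hcard : Fintype.card (Finset (Fin n)) < Fintype.card (Fin D) := by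
    rw [Fintype.card_finset, Fintype.card_fin, Fintype.card_fin]
    simp [hD]
  obtain ⟨i, j, hij, heq⟩ := Fintype.exists_ne_map_eq_of_card_lt supp hcard
  exact hinj i j hij heq

lemma wordMat_replicate (T : Unit → Matrix (Fin n) (Fin n) ℝ) (m : ℕ) :
    wordMat T (List.replicate m ()) = (T ()) ^ m := by
  induction m with
  | zero => simp [wordMat]
  | succ m ih =>
      rw [List.replicate_succ]
      show T () * wordMat T (List.replicate m ()) = _
      rw [ih, pow_succ']

end

theorem statement11 :
    ∃ p : List Unit → ℝ, IsStochastic p ∧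
      (∃ (n : ℕ) (ι τ : Fin n → ℝ) (T : Unit → Matrix (Fin n) (Fin n) ℝ),
        maSeries ι τ T = p) ∧
      ¬ ∃ (n : ℕ) (ι τ : Fin n → ℝ) (T : Unit → Matrix (Fin n) (Fin n) ℝ),
          IsPA ι τ T ∧ maSeries ι τ T = p := by
  refine ⟨pLang, ⟨fun w => mul_nonneg KK_pos.le (gseq_nonneg _), pLang_hasSum⟩,
    ⟨3, ![KK, KK, 0], ![1, 1, 0], fun _ => Amat, maSeries_eq⟩, ?_⟩
  rintro ⟨n, ι, τ, T, hPA, hEq⟩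
  obtain ⟨hι, hτ, hT, -, -⟩ := hPA
  refine no_nonneg_rep KK_pos n ι τ (T ()) hι hτ (fun q q' => hT () q q') ?_
  intro m
  have hw := congrFun hEq (List.replicate m ())
  rw [show pLang (List.replicate m ()) = KK * ((2⁻¹:ℝ) ^ m * (1 + Real.cos m)) by
      simp [pLang, gseq]] at hw
  rw [← hw]
  unfold maSeries
  rw [wordMat_replicate]
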